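/- Let b_real, b_fake > 0 satisfy e^{-b_real} + e^{-b_fake} ≤ 1, and let p, q ≥ 0 with (p,q) ≠ (0,0). Define g(d) = p·h(-log d, b_real) + q·h(-log(1-d), b_fake) on (0,1), where h(L,b) = |L - b| + b is the flooding function. Then every minimizer of g lies in the set {1 - e^{-b_fake}, e^{-b_real}}. -/

import Mathlib

open Real Set

noncomputable def flood (L b : ℝ) : ℝ := |L - b| + b

lemma flood_of_ge {L b : ℝ} (h : b ≤ L) : flood L b = L := by
  unfold flood; rw [abs_of_nonneg (by linarith)]; ring

lemma flood_of_le {L b : ℝ} (h : L ≤ b) : flood L b = 2 * b - L := by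
  unfold flood; rw [abs_of_nonpos (by linarith)]; ring

lemma log_bounds {x y : ℝ} (hx : 0 < x) (hxy : x < y) :
    x * (Real.log y - Real.log x) < y - x ∧ y - x < y * (Real.log y - Real.log x) := by
  have hy : 0 < y := lt_trans hx hxy
  constructor
  · have h1 : Real.log (y / x) < y / x - 1 :=
      Real.log_lt_sub_one_of_pos (by positivity)
        (by intro h; rw [div_eq_one_iff_eq hx.ne'] at h; linarith)
    rw [Real.log_div hy.ne' hx.ne'] at h1
    have h2 : Real.log y - Real.log x < (y - x) / x := by
      rw [sub_div, div_self hx.ne']; linarith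
    have := (lt_div_iff₀ hx).mp h2
    linarith
  · have h1 : Real.log (x / y) < x / y - 1 :=
      Real.log_lt_sub_one_of_pos (by positivity)
        (by intro h; rw [div_eq_one_iff_eq hy.ne'] at h; linarith)
    rw [Real.log_div hx.ne' hy.ne'] at h1
    have h2 : (y - x) / y < Real.log y - Real.log x := by
      rw [sub_div, div_self hy.ne']; linarith
    have := (div_lt_iff₀ hy).mp h2
    linarith

set_option maxHeartbeats 1000000 in
theorem flooded_bce_minimizers_boundary (breal bfake p q : ℝ)
    (hbr : 0 < breal) (hbf : 0 < bfake)
    (hsum : Real.exp (-breal) + Real.exp (-bfake) ≤ 1)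
    (hp : 0 ≤ p) (hq : 0 ≤ q) (hpq : ¬(p = 0 ∧ q = 0)) :
    ∀ d ∈ Ioo (0:ℝ) 1,
      IsMinOn (fun d => p * flood (-Real.log d) breal + q * flood (-Real.log (1 - d)) bfake)
        (Ioo (0:ℝ) 1) d →
      d ∈ ({1 - Real.exp (-bfake), Real.exp (-breal)} : Set ℝ) := by
  intro d hd hmin
  set a := Real.exp (-breal) with ha
  set c := 1 - Real.exp (-bfake) with hc
  obtain ⟨hd0, hd1⟩ := hd
  have ha0 : 0 < a := Real.exp_pos _
  have ha1 : a < 1 := by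
    have h := Real.exp_lt_exp.mpr (show -breal < 0 by linarith)
    rw [Real.exp_zero] at h; rw [ha]; exact h
  have hef0 : 0 < Real.exp (-bfake) := Real.exp_pos _
  have hef1 : Real.exp (-bfake) < 1 := by
    have h := Real.exp_lt_exp.mpr (show -bfake < 0 by linarith)
    rw [Real.exp_zero] at h; exact h
  have hc0 : 0 < c := by rw [hc]; linarith
  have hc1 : c < 1 := by rw [hc]; linarith
  have hac : a ≤ c := by rw [ha, hc]; linarith
  have hloga : Real.log a = -breal := Real.log_exp _
  have hlogc : Real.log (1 - c) = -bfake := by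
    rw [hc]; simpa using Real.log_exp (-bfake)
  -- flood evaluation lemmas
  have floodr_lo : ∀ x : ℝ, 0 < x → x ≤ a →
      flood (-Real.log x) breal = -Real.log x := by
    intro x hx hxa
    refine flood_of_ge ?_
    have := Real.log_le_log hx hxa
    rw [hloga] at this; linarith
  have floodr_hi : ∀ x : ℝ, a ≤ x → x < 1 →
      flood (-Real.log x) breal = 2 * breal + Real.log x := by
    intro x hax hx1
    have h := Real.log_le_log ha0 hax
    rw [hloga] at h
    rw [flood_of_le (by linarith)]; ring
  have floodf_lo : ∀ x : ℝ, 0 < x → x ≤ c →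
      flood (-Real.log (1 - x)) bfake = 2 * bfake + Real.log (1 - x) := by
    intro x hx hxc
    have h := Real.log_le_log (show (0:ℝ) < 1 - c by linarith) (show 1 - c ≤ 1 - x by linarith)
    rw [hlogc] at h
    rw [flood_of_le (by linarith)]; ring
  have floodf_hi : ∀ x : ℝ, c ≤ x → x < 1 →
      flood (-Real.log (1 - x)) bfake = -Real.log (1 - x) := by
    intro x hcx hx1
    refine flood_of_ge ?_
    have h := Real.log_le_log (show (0:ℝ) < 1 - x by linarith) (show 1 - x ≤ 1 - c by linarith)
    rw [hlogc] at h; linarith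
  have hpq' : 0 < p ∨ 0 < q := by
    rcases eq_or_lt_of_le hp with h | h
    · rcases eq_or_lt_of_le hq with h' | h'
      · exact absurd ⟨h.symm, h'.symm⟩ hpq
      · exact Or.inr h'
    · exact Or.inl h
  by_contra hmem
  simp only [Set.mem_insert_iff, Set.mem_singleton_iff] at hmem
  push_neg at hmem
  obtain ⟨hdc, hda⟩ := hmem
  have hga := isMinOn_iff.mp hmin a ⟨ha0, ha1⟩
  have hgc := isMinOn_iff.mp hmin c ⟨hc0, hc1⟩
  rw [floodr_hi a le_rfl ha1, floodf_lo a ha0 hac, hloga] at hga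
  rw [floodr_hi c hac hc1, floodf_hi c le_rfl hc1, hlogc] at hgc
  rcases lt_or_gt_of_ne hda with hlt | hgt
  · -- d < a : g strictly decreasing on (0,a]
    rw [floodr_lo d hd0 hlt.le, floodf_lo d hd0 (le_trans hlt.le hac)] at hga
    have h1 : Real.log d < -breal := by
      have := Real.log_lt_log hd0 hlt; rwa [hloga] at this
    have h2 : Real.log (1 - a) < Real.log (1 - d) :=
      Real.log_lt_log (by linarith) (by linarith)
    rcases hpq' with hp' | hq'
    · nlinarith [hga, mul_lt_mul_of_pos_left h1 hp',
        mul_le_mul_of_nonneg_left h2.le hq]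
    · nlinarith [hga, mul_le_mul_of_nonneg_left h1.le hp,
        mul_lt_mul_of_pos_left h2 hq']
  · -- a < d
    rcases lt_or_gt_of_ne hdc with hltc | hgtc
    · -- a < d < c : concavity argument
      rw [floodr_hi d hgt.le hd1, floodf_lo d hd0 hltc.le] at hga hgc
      rcases eq_or_lt_of_le hp with hp0 | hp'
      · -- p = 0, q > 0 : second term strictly decreasing
        have hq' : 0 < q := hpq'.resolve_left (by rw [← hp0]; exact lt_irrefl 0)
        have h2 : Real.log (1 - d) > -bfake := by
          have := Real.log_lt_log (show (0:ℝ) < 1 - c by linarith) (show 1 - c < 1 - d by linarith)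
          rwa [hlogc] at this
        rw [← hp0] at hgc
        nlinarith [hgc, mul_lt_mul_of_pos_left h2 hq']
      · rcases eq_or_lt_of_le hq with hq0 | hq'
        · -- q = 0, p > 0 : first term strictly increasing
          have h1 : Real.log d > -breal := by
            have := Real.log_lt_log ha0 hgt; rwa [hloga] at this
          rw [← hq0] at hga
          nlinarith [hga, mul_lt_mul_of_pos_left h1 hp']
        · -- p, q > 0 : strict concavity
          have h1d : (0:ℝ) < 1 - d := by linarith
          obtain ⟨b1, b2⟩ := log_bounds ha0 hgt
          obtain ⟨b3, b4⟩ := log_bounds h1d (show (1:ℝ) - d < 1 - a by linarith)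
          obtain ⟨b5, b6⟩ := log_bounds hd0 hltc
          obtain ⟨b7, b8⟩ := log_bounds (show (0:ℝ) < 1 - c by linarith)
            (show (1:ℝ) - c < 1 - d by linarith)
          rw [hloga] at b1 b2
          rw [hlogc] at b7 b8
          have hPQ : p * (Real.log d - (-breal)) ≤
              q * (Real.log (1 - a) - Real.log (1 - d)) := by nlinarith [hga]
          have hQP : q * (Real.log (1 - d) - (-bfake)) ≤
              p * (Real.log c - Real.log d) := by nlinarith [hgc]
          have key1 : p * (1 - d) * (d - a) < q * d * (d - a) := by
            have t1 := mul_lt_mul_of_pos_left b2 (mul_pos hp' h1d)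
            have t2 := mul_le_mul_of_nonneg_left hPQ (by positivity : (0:ℝ) ≤ d * (1 - d))
            have t3 := mul_lt_mul_of_pos_left b3 (mul_pos hq' hd0)
            ring_nf at t1 t2 t3 ⊢
            linarith [t1, t2, t3]
          have key2 : q * d * (c - d) < p * (1 - d) * (c - d) := by
            have t1 := mul_lt_mul_of_pos_left b8 (mul_pos hq' hd0)
            have t2 := mul_le_mul_of_nonneg_left hQP (by positivity : (0:ℝ) ≤ d * (1 - d))
            have t3 := mul_lt_mul_of_pos_left b5 (mul_pos hp' h1d)
            ring_nf at t1 t2 t3 ⊢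
            linarith [t1, t2, t3]
          have k1 : p * (1 - d) < q * d :=
            (mul_lt_mul_iff_of_pos_right (show (0:ℝ) < d - a by linarith)).mp key1
          have k2 : q * d < p * (1 - d) :=
            (mul_lt_mul_iff_of_pos_right (show (0:ℝ) < c - d by linarith)).mp key2
          linarith
    · -- c < d : g strictly increasing on [c,1)
      rw [floodr_hi d (le_trans hac hgtc.le) hd1, floodf_hi d hgtc.le hd1] at hgc
      have h1 : Real.log c < Real.log d := Real.log_lt_log hc0 hgtc
      have h2 : Real.log (1 - d) < -bfake := by
        have := Real.log_lt_log (show (0:ℝ) < 1 - d by linarith) (show 1 - d < 1 - c by linarith)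
        rwa [hlogc] at this
      rcases hpq' with hp' | hq'
      · nlinarith [hgc, mul_lt_mul_of_pos_left h1 hp',
          mul_le_mul_of_nonneg_left h2.le hq]
      · nlinarith [hgc, mul_le_mul_of_nonneg_left h1.le hp,
          mul_lt_mul_of_pos_left h2 hq']
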